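/- Let $F:(\mathbb{R}^+)^2\to\mathbb{R}^2$ be locally Lipschitz with a globally asymptotically stable equilibrium $\bar u$, and let $V\in C^1((\mathbb{R}^+)^2)$ be a strict Lyapunov function for $u' = F(u)$ with compact level sets, with $\nabla V(u)\cdot F(u) < 0$ for $u\neq\bar u$ and minimum value $\delta = V(\bar u)$. Suppose moreover that for every $a>\delta$ there is $\tilde\beta_a>0$ such that $\nabla V(u)\cdot F(u) \le -\tilde\beta_a(V(u)-a)$ whenever $V(u)\ge a$. If $\tilde u:[0,\infty)\to(\mathbb{R}^+)^2$ solves the perturbed equation $\tilde u' = F(\tilde u) + f$ with $f\in L^1(0,\infty)\cap C([0,\infty))$ and $\tilde u$ bounded, then $\tilde u(t)\to\bar u$ as $t\to\infty$. -/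

import Mathlib

open Filter MeasureTheory

lemma right_deriv_nonneg' {φ : ℝ → ℝ} {d : ℝ} (hd : HasDerivAt φ d 0)
    (h : ∀ t ∈ Set.Ioo (0:ℝ) 1, φ 0 ≤ φ t) : 0 ≤ d := by
  have h1 : Tendsto (slope φ 0) (nhdsWithin 0 (Set.Ioi 0)) (nhds d) :=
    (hasDerivAt_iff_tendsto_slope.mp hd).mono_left
      (nhdsWithin_mono _ (fun x hx => ne_of_gt hx))
  refine ge_of_tendsto h1 ?_
  filter_upwards [Ioo_mem_nhdsGT_of_mem (Set.mem_Ico.2 ⟨le_refl (0:ℝ), one_pos⟩)] with t ht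
  rw [slope_def_field]
  have h2 := h t ht
  have ht0 : (0:ℝ) < t := ht.1
  have : 0 ≤ (φ t - φ 0) / (t - 0) := by
    apply div_nonneg (by linarith) (by linarith)
  simpa using this

lemma abs_coord_le_norm' {n : ℕ} (x : EuclideanSpace ℝ (Fin n)) (i : Fin n) :
    |x i| ≤ ‖x‖ := by
  have h1 : x i = inner (𝕜 := ℝ) x (EuclideanSpace.single i (1:ℝ)) := by
    rw [EuclideanSpace.inner_single_right]
    simp
  rw [h1]
  refine le_trans (abs_real_inner_le_norm _ _) ?_
  rw [EuclideanSpace.norm_single]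
  simp

set_option maxHeartbeats 4000000 in
theorem perturbed_lyapunov_convergence
    (F : EuclideanSpace ℝ (Fin 2) → EuclideanSpace ℝ (Fin 2))
    (hF : LocallyLipschitz F)
    (ubar : EuclideanSpace ℝ (Fin 2)) (hubar_pos : ∀ i, 0 ≤ ubar i)
    (hequi : F ubar = 0)
    (hGAS : ∀ u : ℝ → EuclideanSpace ℝ (Fin 2),
      (∀ i, 0 ≤ u 0 i) → (∀ t ≥ (0:ℝ), ∀ i, 0 ≤ u t i) →
      (∀ t ≥ (0:ℝ), HasDerivAt u (F (u t)) t) →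
      Tendsto u atTop (nhds ubar))
    (V : EuclideanSpace ℝ (Fin 2) → ℝ) (hV : ContDiff ℝ 1 V)
    (gradV : EuclideanSpace ℝ (Fin 2) → EuclideanSpace ℝ (Fin 2))
    (hgrad : ∀ u, HasGradientAt V (gradV u) u)
    (δ : ℝ) (hδ : V ubar = δ)
    (hmin : ∀ u, (∀ i, 0 ≤ u i) → δ ≤ V u)
    (hstrict : ∀ u, (∀ i, 0 ≤ u i) → u ≠ ubar →
      inner (𝕜 := ℝ) (gradV u) (F u) < 0)
    (hcompact : ∀ c : ℝ, IsCompact {u : EuclideanSpace ℝ (Fin 2) |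
      (∀ i, 0 ≤ u i) ∧ V u ≤ c})
    (hβ : ∀ a > δ, ∃ β > (0:ℝ), ∀ u, (∀ i, 0 ≤ u i) → a ≤ V u →
      inner (𝕜 := ℝ) (gradV u) (F u) ≤ -β * (V u - a))
    (f : ℝ → EuclideanSpace ℝ (Fin 2))
    (hf_cont : Continuous f)
    (hf_int : IntegrableOn f (Set.Ioi (0:ℝ)))
    (utilde : ℝ → EuclideanSpace ℝ (Fin 2))
    (hu_pos : ∀ t ≥ (0:ℝ), ∀ i, 0 ≤ utilde t i)
    (hu_sol : ∀ t ≥ (0:ℝ), HasDerivAt utilde (F (utilde t) + f t) t)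
    (R : ℝ) (hu_bdd : ∀ t ≥ (0:ℝ), ‖utilde t‖ ≤ R) :
    Tendsto utilde atTop (nhds ubar) := by
  have hRnn : (0:ℝ) ≤ R := le_trans (norm_nonneg _) (hu_bdd 0 le_rfl)
  have hFc : Continuous F := hF.continuous
  -- continuity of gradV
  have hgradV_cont : Continuous gradV := by
    have h1 : Continuous (fderiv ℝ V) := hV.continuous_fderiv one_ne_zero
    have h2 : ∀ u, gradV u = (InnerProductSpace.toDual ℝ _).symm (fderiv ℝ V u) := by
      intro u
      rw [(hgrad u).hasFDerivAt.fderiv]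
      simp
    rw [funext h2]
    exact (InnerProductSpace.toDual ℝ _).symm.continuous.comp h1
  -- bound on gradV on closed ball
  obtain ⟨M0, hM0⟩ :=
    (isCompact_closedBall (0:EuclideanSpace ℝ (Fin 2)) R).exists_bound_of_continuousOn
      hgradV_cont.continuousOn
  set M := max M0 0 with hMdef
  have hMnn : (0:ℝ) ≤ M := le_max_right _ _
  have hM : ∀ t ≥ (0:ℝ), ‖gradV (utilde t)‖ ≤ M := by
    intro t ht
    exact le_trans (hM0 _ (Metric.mem_closedBall.2 (by simpa [dist_eq_norm] using hu_bdd t ht)))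
      (le_max_left _ _)
  -- g and its derivative
  set g : ℝ → ℝ := fun t => V (utilde t) with hgdef
  have hg' : ∀ t ≥ (0:ℝ),
      HasDerivAt g (inner (𝕜 := ℝ) (gradV (utilde t)) (F (utilde t) + f t)) t := by
    intro t ht
    have := ((hgrad (utilde t)).hasFDerivAt).comp_hasDerivAt t (hu_sol t ht)
    simpa [InnerProductSpace.toDual_apply_apply, Function.comp_def] using this
  have hgm_cont : Continuous (fun s => g (max s 0)) := by
    have hmax : Continuous (fun s : ℝ => max s 0) := continuous_id.max continuous_const
    rw [continuous_iff_continuousAt]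
    intro s
    have h3 := ContinuousAt.comp (x := s) ((hg' (max s 0) (le_max_right s 0)).continuousAt)
      hmax.continuousAt
    exact h3
  -- I₁, the cumulative integral of ‖f‖
  set I₁ : ℝ → ℝ := fun t => ∫ s in (0:ℝ)..t, ‖f s‖ with hI₁def
  have hI₁deriv : ∀ t, HasDerivAt I₁ ‖f t‖ t := fun t =>
    (hf_cont.norm.integral_hasStrictDerivAt 0 t).hasDerivAt
  set Iinf : ℝ := ∫ s in Set.Ioi (0:ℝ), ‖f s‖ with hIinfdef
  have hI₁tendsto : Tendsto I₁ atTop (nhds Iinf) :=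
    intervalIntegral_tendsto_integral_Ioi 0 hf_int.norm tendsto_id
  have hI₁add : ∀ t t' : ℝ, I₁ t + (∫ s in t..t', ‖f s‖) = I₁ t' := by
    intro t t'
    exact intervalIntegral.integral_add_adjacent_intervals
      (hf_cont.norm.intervalIntegrable _ _) (hf_cont.norm.intervalIntegrable _ _)
  have hI₁mono : ∀ t t' : ℝ, t ≤ t' → I₁ t ≤ I₁ t' := by
    intro t t' h
    have h1 := hI₁add t t'
    have h2 : 0 ≤ ∫ s in t..t', ‖f s‖ :=
      intervalIntegral.integral_nonneg h (fun s _ => norm_nonneg _)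
    linarith
  have hI₁le : ∀ t, I₁ t ≤ Iinf := by
    intro t
    refine ge_of_tendsto hI₁tendsto ?_
    filter_upwards [eventually_ge_atTop t] with s hs using hI₁mono t s hs
  have hI₁0 : I₁ 0 = 0 := intervalIntegral.integral_same
  -- basic facts
  have hVF_nonpos : ∀ u : EuclideanSpace ℝ (Fin 2), (∀ i, 0 ≤ u i) →
      inner (𝕜 := ℝ) (gradV u) (F u) ≤ 0 := by
    intro u hu
    by_cases h : u = ubar
    · subst h; rw [hequi]; simp
    · exact (hstrict u hu h).le
  have hg_ge : ∀ t ≥ (0:ℝ), δ ≤ g t := fun t ht => hmin _ (hu_pos t ht)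
  -- main Lyapunov decay block
  have block : ∀ a, δ < a → ∃ L : ℝ, Tendsto g atTop (nhds L) ∧ L ≤ a := by
    intro a ha
    obtain ⟨β, hβpos, hβa⟩ := hβ a ha
    set h' : ℝ → ℝ := fun s => max (g (max s 0) - a) 0 with hh'def
    have hh'cont : Continuous h' := (hgm_cont.sub continuous_const).max continuous_const
    have hh'nonneg : ∀ s, 0 ≤ h' s := fun s => le_max_right _ _
    set J : ℝ → ℝ := fun t => ∫ s in (0:ℝ)..t, h' s with hJdef
    have hJderiv : ∀ t, HasDerivAt J (h' t) t := fun t =>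
      (hh'cont.integral_hasStrictDerivAt 0 t).hasDerivAt
    have hJmono : Monotone J := by
      apply monotone_of_deriv_nonneg (fun t => (hJderiv t).differentiableAt)
      intro t; rw [(hJderiv t).deriv]; exact hh'nonneg t
    have hJ0 : J 0 = 0 := intervalIntegral.integral_same
    have hJadd : ∀ t t' : ℝ, J t + (∫ s in t..t', h' s) = J t' := fun t t' =>
      intervalIntegral.integral_add_adjacent_intervals
        (hh'cont.intervalIntegrable _ _) (hh'cont.intervalIntegrable _ _)
    set ψ : ℝ → ℝ := fun t => g t + β * J t - M * I₁ t with hψdef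
    have hψderiv : ∀ t ≥ (0:ℝ), HasDerivAt ψ
        (inner (𝕜 := ℝ) (gradV (utilde t)) (F (utilde t) + f t) + β * h' t - M * ‖f t‖) t := by
      intro t ht
      exact ((hg' t ht).add ((hJderiv t).const_mul β)).sub ((hI₁deriv t).const_mul M)
    have hd_nonpos : ∀ t ≥ (0:ℝ),
        inner (𝕜 := ℝ) (gradV (utilde t)) (F (utilde t) + f t) + β * h' t - M * ‖f t‖ ≤ 0 := by
      intro t ht
      have hsplit : inner (𝕜 := ℝ) (gradV (utilde t)) (F (utilde t) + f t)
          = inner (𝕜 := ℝ) (gradV (utilde t)) (F (utilde t))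
            + inner (𝕜 := ℝ) (gradV (utilde t)) (f t) := inner_add_right _ _ _
      have hip : inner (𝕜 := ℝ) (gradV (utilde t)) (f t) ≤ M * ‖f t‖ :=
        le_trans (real_inner_le_norm _ _)
          (mul_le_mul_of_nonneg_right (hM t ht) (norm_nonneg _))
      have hmaxt : max t 0 = t := max_eq_left ht
      by_cases hc : a ≤ g t
      · have h1 : inner (𝕜 := ℝ) (gradV (utilde t)) (F (utilde t)) ≤ -β * (g t - a) :=
          hβa _ (hu_pos t ht) hc
        have h2 : h' t = g t - a := by
          simp only [hh'def, hmaxt]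
          exact max_eq_left (by linarith)
        rw [hsplit, h2]
        linarith
      · have h1 : inner (𝕜 := ℝ) (gradV (utilde t)) (F (utilde t)) ≤ 0 :=
          hVF_nonpos _ (hu_pos t ht)
        have h2 : h' t = 0 := by
          simp only [hh'def, hmaxt]
          exact max_eq_right (by linarith)
        rw [hsplit, h2]
        linarith
    have hψanti : AntitoneOn ψ (Set.Ici 0) := by
      apply antitoneOn_of_deriv_nonpos (convex_Ici 0)
      · intro t ht
        exact ((hψderiv t ht).continuousAt).continuousWithinAt
      · intro t ht
        rw [interior_Ici] at ht
        exact ((hψderiv t (le_of_lt ht)).differentiableAt).differentiableWithinAt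
      · intro t ht
        rw [interior_Ici] at ht
        rw [(hψderiv t ht.le).deriv]
        exact hd_nonpos t ht.le
    have hψ0 : ψ 0 = g 0 := by simp only [hψdef, hJ0, hI₁0]; ring
    have hJnonneg : ∀ t ≥ (0:ℝ), 0 ≤ J t := fun t ht => hJ0 ▸ hJmono ht
    have hψle : ∀ t ≥ (0:ℝ), ψ t ≤ g 0 := fun t ht =>
      hψ0 ▸ hψanti Set.self_mem_Ici ht ht
    have hJbound : ∀ t ≥ (0:ℝ), β * J t ≤ g 0 - δ + M * Iinf := by
      intro t ht
      have h1 := hψle t ht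
      have h2 := hg_ge t ht
      have h3 : M * I₁ t ≤ M * Iinf := mul_le_mul_of_nonneg_left (hI₁le t) hMnn
      simp only [hψdef] at h1
      linarith
    have hψlb : ∀ t ≥ (0:ℝ), δ - M * Iinf ≤ ψ t := by
      intro t ht
      have h2 := hg_ge t ht
      have h3 : M * I₁ t ≤ M * Iinf := mul_le_mul_of_nonneg_left (hI₁le t) hMnn
      have h4 : 0 ≤ β * J t := mul_nonneg hβpos.le (hJnonneg t ht)
      simp only [hψdef]
      linarith
    set ψm : ℝ → ℝ := fun t => ψ (max t 0) with hψmdef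
    have hψmanti : Antitone ψm := fun s t hst =>
      hψanti (le_max_right s 0) (le_max_right t 0) (max_le_max hst le_rfl)
    have hψmbdd : BddBelow (Set.range ψm) := by
      refine ⟨δ - M * Iinf, ?_⟩
      rintro x ⟨t, rfl⟩
      exact hψlb _ (le_max_right t 0)
    have hψmtend : Tendsto ψm atTop (nhds (⨅ t, ψm t)) := tendsto_atTop_ciInf hψmanti hψmbdd
    have hψtend : Tendsto ψ atTop (nhds (⨅ t, ψm t)) := by
      apply hψmtend.congr'
      filter_upwards [eventually_ge_atTop (0:ℝ)] with t ht
      simp only [hψmdef, max_eq_left ht]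
    have hJbdd : BddAbove (Set.range J) := by
      refine ⟨max 0 ((g 0 - δ + M * Iinf) / β), ?_⟩
      rintro x ⟨t, rfl⟩
      rcases le_or_gt t 0 with h | h
      · exact le_trans ((hJmono h).trans_eq hJ0) (le_max_left _ _)
      · refine le_trans ?_ (le_max_right _ _)
        rw [le_div_iff₀ hβpos]
        have := hJbound t h.le
        linarith
    have hJtend : Tendsto J atTop (nhds (⨆ t, J t)) := tendsto_atTop_ciSup hJmono hJbdd
    set L : ℝ := (⨅ t, ψm t) - β * (⨆ t, J t) + M * Iinf with hLdef
    have hgtend : Tendsto g atTop (nhds L) := by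
      have h1 : Tendsto (fun t => ψ t - β * J t + M * I₁ t) atTop (nhds L) :=
        (hψtend.sub (hJtend.const_mul β)).add (hI₁tendsto.const_mul M)
      apply h1.congr
      intro t
      simp only [hψdef]
      ring
    refine ⟨L, hgtend, ?_⟩
    by_contra hL
    push_neg at hL
    set ε0 : ℝ := (L - a) / 2 with hε0def
    have hε0 : 0 < ε0 := by simp only [hε0def]; linarith
    have hev : ∀ᶠ t in atTop, a + ε0 ≤ g t := by
      apply hgtend.eventually (eventually_ge_nhds ?_)
      simp only [hε0def]
      linarith
    obtain ⟨T0, hT0⟩ := eventually_atTop.mp hev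
    set T' := max T0 0 with hT'def
    have hT'0 : (0:ℝ) ≤ T' := le_max_right _ _
    have hh'ge : ∀ t, T' ≤ t → ε0 ≤ h' t := by
      intro t ht
      have h1 := hT0 t (le_trans (le_max_left _ _) ht)
      have hmaxt : max t 0 = t := max_eq_left (le_trans hT'0 ht)
      simp only [hh'def, hmaxt]
      exact le_max_of_le_left (by linarith)
    have hJle : ∀ t, J t ≤ ⨆ t, J t := fun t => le_ciSup hJbdd t
    have key : ∀ t, T' ≤ t → J T' + (t - T') * ε0 ≤ J t := by
      intro t ht
      have h1 : (∫ s in T'..t, (ε0:ℝ)) ≤ ∫ s in T'..t, h' s := by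
        apply intervalIntegral.integral_mono_on ht (intervalIntegrable_const)
          (hh'cont.intervalIntegrable _ _)
        intro s hs
        exact hh'ge s hs.1
      rw [intervalIntegral.integral_const, smul_eq_mul] at h1
      have h2 := hJadd T' t
      linarith
    have hfin : J T' + ((⨆ t, J t) - J T' + 1) ≤ ⨆ t, J t := by
      have h0 : J T' ≤ ⨆ t, J t := hJle T'
      have h1 : T' ≤ T' + ((⨆ t, J t) - J T' + 1) / ε0 := by
        have : 0 ≤ ((⨆ t, J t) - J T' + 1) / ε0 := div_nonneg (by linarith) hε0.le
        linarith
      have h2 := key _ h1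
      have h3 := hJle (T' + ((⨆ t, J t) - J T' + 1) / ε0)
      rw [show T' + ((⨆ t, J t) - J T' + 1) / ε0 - T' = ((⨆ t, J t) - J T' + 1) / ε0 by ring,
        div_mul_cancel₀ _ (ne_of_gt hε0)] at h2
      linarith
    linarith [hJle T']
  -- conclude g → δ
  obtain ⟨L, hgtend, _⟩ := block (δ + 1) (by linarith)
  have hLle : ∀ a, δ < a → L ≤ a := by
    intro a ha
    obtain ⟨L', h1, h2⟩ := block a ha
    rwa [tendsto_nhds_unique hgtend h1]
  have hLδ : L = δ := by
    have hge : δ ≤ L := ge_of_tendsto hgtend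
      (by filter_upwards [eventually_ge_atTop (0:ℝ)] with t ht using hg_ge t ht)
    by_contra h
    have h1 : δ < L := lt_of_le_of_ne hge (Ne.symm h)
    have h2 := hLle ((δ + L) / 2) (by linarith)
    linarith
  have hgδ : Tendsto g atTop (nhds δ) := hLδ ▸ hgtend

  -- Suppose utilde does not converge to ubar
  by_contra hnot
  rw [Metric.tendsto_atTop] at hnot
  push_neg at hnot
  obtain ⟨ε, hεpos, hseq⟩ := hnot
  choose tt htt hdist using hseq
  set s : ℕ → ℝ := fun n => tt (n : ℝ) with hsdef
  have hs_ge : ∀ n : ℕ, (n:ℝ) ≤ s n := fun n => htt (n:ℝ)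
  have hs_nonneg : ∀ n, (0:ℝ) ≤ s n := fun n => le_trans (Nat.cast_nonneg n) (hs_ge n)
  have hs_tendsto : Tendsto s atTop atTop :=
    tendsto_atTop_mono hs_ge tendsto_natCast_atTop_atTop
  have hmem : ∀ n, utilde (s n) ∈ Metric.closedBall (0:EuclideanSpace ℝ (Fin 2)) R := by
    intro n
    rw [Metric.mem_closedBall, dist_zero_right]
    exact hu_bdd _ (hs_nonneg n)
  obtain ⟨ustar, hustar_mem, φ, hφmono, hφtend⟩ :=
    (isCompact_closedBall (0:EuclideanSpace ℝ (Fin 2)) R).tendsto_subseq hmem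
  have hsφ : Tendsto (fun n => s (φ n)) atTop atTop :=
    hs_tendsto.comp hφmono.tendsto_atTop
  have hVstar : V ustar = δ := by
    have h1 : Tendsto (fun n => g (s (φ n))) atTop (nhds (V ustar)) :=
      (hV.continuous.tendsto ustar).comp hφtend
    have h2 : Tendsto (fun n => g (s (φ n))) atTop (nhds δ) := hgδ.comp hsφ
    exact tendsto_nhds_unique h1 h2
  have hproj_cont : ∀ i : Fin 2, Continuous (fun u : EuclideanSpace ℝ (Fin 2) => u i) :=
    fun i => (EuclideanSpace.proj i).continuous
  have hstar_nonneg : ∀ i, 0 ≤ ustar i := by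
    intro i
    have h1 : Tendsto (fun n => utilde (s (φ n)) i) atTop (nhds (ustar i)) :=
      ((hproj_cont i).tendsto ustar).comp hφtend
    exact ge_of_tendsto h1 (Eventually.of_forall fun n => hu_pos _ (hs_nonneg _) i)
  have hstar_ne : ustar ≠ ubar := by
    intro h
    have h1 : Tendsto (fun n => dist (utilde (s (φ n))) ubar) atTop
        (nhds (dist ustar ubar)) :=
      ((continuous_id.dist continuous_const).tendsto ustar).comp hφtend
    have h2 : ε ≤ dist ustar ubar :=
      ge_of_tendsto h1 (Eventually.of_forall fun n => hdist _)
    rw [h, dist_self] at h2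
    linarith
  -- first-order conditions at ustar
  set p := gradV ustar with hpdef
  have hpF : inner (𝕜 := ℝ) p (F ustar) < 0 := hstrict ustar hstar_nonneg hstar_ne
  have hderiv_dir : ∀ v : EuclideanSpace ℝ (Fin 2),
      HasDerivAt (fun t : ℝ => V (ustar + t • v)) (inner (𝕜 := ℝ) p v) 0 := by
    intro v
    have h1 : HasDerivAt (fun t : ℝ => t • v) ((1:ℝ) • v) 0 := (hasDerivAt_id 0).smul_const v
    have hline : HasDerivAt (fun t : ℝ => ustar + t • v) v 0 := by
      simpa using h1.const_add ustar
    have h0 : ustar + (0:ℝ) • v = ustar := by simp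
    have hF' : HasFDerivAt V ((InnerProductSpace.toDual ℝ _) p) (ustar + (0:ℝ) • v) :=
      h0.symm ▸ (hgrad ustar).hasFDerivAt
    have hcomp := hF'.comp_hasDerivAt 0 hline
    simpa [InnerProductSpace.toDual_apply_apply, Function.comp_def] using hcomp
  have hmin_dir : ∀ v : EuclideanSpace ℝ (Fin 2),
      (∀ t ∈ Set.Ioo (0:ℝ) 1, ∀ i, 0 ≤ (ustar + t • v) i) → 0 ≤ inner (𝕜 := ℝ) p v := by
    intro v hv
    apply right_deriv_nonneg' (hderiv_dir v)
    intro t ht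
    have h0 : V (ustar + (0:ℝ) • v) = V ustar := by simp
    rw [h0, hVstar]
    exact hmin _ (hv t ht)
  have hp_nonneg : ∀ j : Fin 2, 0 ≤ p j := by
    intro j
    have hval : inner (𝕜 := ℝ) p (EuclideanSpace.single j (1:ℝ)) = p j := by
      rw [EuclideanSpace.inner_single_right]
      simp
    rw [← hval]
    apply hmin_dir
    intro t ht i
    have happ : (ustar + t • EuclideanSpace.single j (1:ℝ)) i
        = ustar i + t * (EuclideanSpace.single j (1:ℝ)) i := by
      simp [PiLp.add_apply, PiLp.smul_apply, smul_eq_mul]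
    rw [happ, EuclideanSpace.single_apply]
    split_ifs with h
    · have h1 := hstar_nonneg i
      have h2 := ht.1.le
      nlinarith
    · simpa using hstar_nonneg i
  have hpu : inner (𝕜 := ℝ) p ustar ≤ 0 := by
    have h1 : (0:ℝ) ≤ inner (𝕜 := ℝ) p (-ustar) := by
      apply hmin_dir
      intro t ht i
      have happ : (ustar + t • (-ustar)) i = (1 - t) * ustar i := by
        simp [PiLp.add_apply, PiLp.smul_apply, PiLp.neg_apply]
        ring
      rw [happ]
      exact mul_nonneg (by linarith [ht.2.le]) (hstar_nonneg i)
    rw [inner_neg_right] at h1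
    linarith
  have hinner_sum : ∀ x y : EuclideanSpace ℝ (Fin 2),
      inner (𝕜 := ℝ) x y = ∑ i, x i * y i := by
    intro x y
    rw [PiLp.inner_apply]
    simp [RCLike.inner_apply, mul_comm]
  obtain ⟨j, hj⟩ : ∃ j, p j * F ustar j < 0 := by
    by_contra hcon
    push_neg at hcon
    have h1 : (0:ℝ) ≤ ∑ i, p i * F ustar i := Finset.sum_nonneg fun i _ => hcon i
    rw [← hinner_sum] at h1
    linarith
  have hpj : 0 < p j := by
    rcases lt_or_eq_of_le (hp_nonneg j) with h | h
    · exact h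
    · exfalso
      rw [← h] at hj
      simp at hj
  have hFj : F ustar j < 0 := by
    by_contra h
    push_neg at h
    nlinarith
  have hzero : p j * ustar j = 0 := by
    have hsumle : ∑ i, p i * ustar i ≤ 0 := by
      rw [← hinner_sum]
      exact hpu
    have hterm : ∀ i ∈ Finset.univ, (0:ℝ) ≤ p i * ustar i := fun i _ =>
      mul_nonneg (hp_nonneg i) (hstar_nonneg i)
    have h1 := (Finset.sum_eq_zero_iff_of_nonneg hterm).mp
      (le_antisymm hsumle (Finset.sum_nonneg hterm))
    exact h1 j (Finset.mem_univ j)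
  have hustarj : ustar j = 0 := by
    rcases mul_eq_zero.mp hzero with h | h
    · exact absurd h (ne_of_gt hpj)
    · exact h
  -- quantitative setup
  obtain ⟨c, hc, hc2⟩ : ∃ c : ℝ, c < 0 ∧ F ustar j = 2 * c :=
    ⟨F ustar j / 2, by linarith, by ring⟩
  have hcontFj : Continuous fun u : EuclideanSpace ℝ (Fin 2) => F u j :=
    (hproj_cont j).comp hFc
  obtain ⟨r, hrpos, hr⟩ : ∃ r > (0:ℝ), ∀ u : EuclideanSpace ℝ (Fin 2),
      ‖u - ustar‖ ≤ r → F u j ≤ c := by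
    obtain ⟨r', hr'pos, hr'⟩ := Metric.continuousAt_iff.mp hcontFj.continuousAt (-c) (by linarith)
    refine ⟨r' / 2, by linarith, ?_⟩
    intro u hu
    have hd : dist u ustar < r' := by
      rw [dist_eq_norm]
      linarith
    have h2 := hr' hd
    rw [Real.dist_eq] at h2
    have h3 := abs_lt.mp h2
    linarith [h3.2]
  obtain ⟨B0, hB0⟩ :=
    (isCompact_closedBall (0:EuclideanSpace ℝ (Fin 2)) R).exists_bound_of_continuousOn
      hFc.continuousOn
  set B := max B0 0 with hBdef
  have hBnn : (0:ℝ) ≤ B := le_max_right _ _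
  have hB : ∀ t ≥ (0:ℝ), ‖F (utilde t)‖ ≤ B := fun t ht =>
    le_trans (hB0 _ (Metric.mem_closedBall.2 (by simpa [dist_eq_norm] using hu_bdd t ht)))
      (le_max_left _ _)
  have hcne : c ≠ 0 := ne_of_lt hc
  obtain ⟨K, hKeq⟩ : ∃ K : ℝ, K = 2 + 2 * B / (-c) := ⟨_, rfl⟩
  have hK2 : (2:ℝ) ≤ K := by
    have h1 : 0 ≤ 2 * B / (-c) := div_nonneg (by linarith) (by linarith)
    rw [hKeq]
    linarith
  have hKpos : (0:ℝ) < K := by linarith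
  have hKne : K ≠ 0 := by linarith
  obtain ⟨ε', hε'eq⟩ : ∃ e : ℝ, e = r / (4 * K) := ⟨_, rfl⟩
  have hε'pos : 0 < ε' := by
    rw [hε'eq]
    exact div_pos hrpos (by linarith)
  have hε'le : ε' ≤ r / 8 := by
    rw [hε'eq]
    apply div_le_div_of_nonneg_left hrpos.le (by linarith) (by linarith)
  obtain ⟨D, hDeq⟩ : ∃ d : ℝ, d = 2 * ε' / (-c) := ⟨_, rfl⟩
  have hDpos : 0 < D := by
    rw [hDeq]
    exact div_pos (by linarith) (by linarith)
  have hKD : K * ε' = 2 * ε' + B * D := by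
    rw [hKeq, hDeq]
    ring
  have hKε' : K * ε' = r / 4 := by
    rw [hε'eq, mul_div_assoc', mul_comm 4 K, mul_div_mul_left r 4 hKne]
  obtain ⟨T, hT⟩ : ∃ T : ℝ, ∀ t ≥ T, Iinf - ε' ≤ I₁ t := by
    have h1 := hI₁tendsto.eventually (eventually_ge_nhds (show Iinf - ε' < Iinf by linarith))
    exact eventually_atTop.mp h1
  have htail : ∀ t₀ t : ℝ, max T 0 ≤ t₀ → t₀ ≤ t → (∫ x in t₀..t, ‖f x‖) ≤ ε' := by
    intro t₀ t h1 h2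
    have h3 := hI₁add t₀ t
    have h4 := hI₁le t
    have h5 := hT t₀ (le_trans (le_max_left _ _) h1)
    linarith
  have hev2 : ∀ᶠ n in atTop, ‖utilde (s (φ n)) - ustar‖ ≤ ε' ∧ max T 0 ≤ s (φ n) := by
    have h1 : ∀ᶠ n in atTop, utilde (s (φ n)) ∈ Metric.ball ustar ε' :=
      hφtend (Metric.ball_mem_nhds ustar hε'pos)
    have h2 : ∀ᶠ n in atTop, max T 0 ≤ s (φ n) := hsφ.eventually_ge_atTop _
    filter_upwards [h1, h2] with n hn1 hn2
    refine ⟨?_, hn2⟩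
    rw [Metric.mem_ball, dist_eq_norm] at hn1
    exact hn1.le
  obtain ⟨n0, hn0⟩ := hev2.exists
  set t₀ : ℝ := s (φ n0) with ht₀def
  have ht₀T : max T 0 ≤ t₀ := hn0.2
  have ht₀0 : (0:ℝ) ≤ t₀ := le_trans (le_max_right T 0) ht₀T
  have ht₀close : ‖utilde t₀ - ustar‖ ≤ ε' := hn0.1
  have ht₀j : utilde t₀ j ≤ ε' := by
    have h1 : (utilde t₀ - ustar) j = utilde t₀ j - ustar j := by
      simp [PiLp.sub_apply]
    have h2 := abs_coord_le_norm' (utilde t₀ - ustar) j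
    rw [h1, hustarj] at h2
    have h3 := le_abs_self (utilde t₀ j - 0)
    linarith
  have hucont : ∀ t ≥ (0:ℝ), ContinuousAt utilde t := fun t ht => (hu_sol t ht).continuousAt
  have hintcont : ∀ t₁ t₂ : ℝ, 0 ≤ t₁ → t₁ ≤ t₂ →
      ContinuousOn (fun x => F (utilde x) + f x) (Set.uIcc t₁ t₂) := by
    intro t₁ t₂ h1 h2 x hx
    rw [Set.uIcc_of_le h2] at hx
    have hx0 : (0:ℝ) ≤ x := le_trans h1 hx.1
    exact ((hFc.continuousAt.comp (hucont x hx0)).add hf_cont.continuousAt).continuousWithinAt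
  -- the key claim
  set t₁ : ℝ := t₀ + D + 1 with ht₁def
  have ht₁gt : t₀ ≤ t₁ := by
    simp only [ht₁def]
    linarith
  have claim : ∀ t, t₀ ≤ t → (∀ x ∈ Set.Icc t₀ t, ‖utilde x - ustar‖ ≤ r) →
      utilde t j ≤ 2 * ε' + c * (t - t₀) ∧ ‖utilde t - ustar‖ ≤ r / 4 := by
    intro t ht hball
    have ht0 : (0:ℝ) ≤ t := le_trans ht₀0 ht
    -- coordinate FTC
    have hder : ∀ x ∈ Set.uIcc t₀ t, HasDerivAt (fun τ => utilde τ j)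
        ((F (utilde x) + f x) j) x := by
      intro x hx
      rw [Set.uIcc_of_le ht] at hx
      have hx0 : (0:ℝ) ≤ x := le_trans ht₀0 hx.1
      have h1 := (EuclideanSpace.proj j).hasFDerivAt.comp_hasDerivAt x (hu_sol x hx0)
      simpa [Function.comp_def] using h1
    have hint1 : IntervalIntegrable (fun x => (F (utilde x) + f x) j) volume t₀ t := by
      apply ContinuousOn.intervalIntegrable
      exact (hproj_cont j).comp_continuousOn (hintcont t₀ t ht₀0 ht)
    have hi1 : utilde t j - utilde t₀ j = ∫ x in t₀..t, (F (utilde x) + f x) j :=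
      (intervalIntegral.integral_eq_sub_of_hasDerivAt hder hint1).symm
    have hint2 : IntervalIntegrable (fun x => c + ‖f x‖) volume t₀ t :=
      (intervalIntegrable_const).add (hf_cont.norm.intervalIntegrable _ _)
    have hmono1 : (∫ x in t₀..t, (F (utilde x) + f x) j) ≤ ∫ x in t₀..t, (c + ‖f x‖) := by
      apply intervalIntegral.integral_mono_on ht hint1 hint2
      intro x hx
      have h1 : F (utilde x) j ≤ c := hr _ (hball x hx)
      have h2 : f x j ≤ ‖f x‖ :=
        le_trans (le_abs_self _) (abs_coord_le_norm' _ _)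
      have h3 : (F (utilde x) + f x) j = F (utilde x) j + f x j := by
        simp [PiLp.add_apply]
      rw [h3]
      linarith
    have hsplit2 : (∫ x in t₀..t, (c + ‖f x‖))
        = c * (t - t₀) + ∫ x in t₀..t, ‖f x‖ := by
      rw [intervalIntegral.integral_add intervalIntegrable_const
        (hf_cont.norm.intervalIntegrable _ _), intervalIntegral.integral_const, smul_eq_mul]
      ring
    have htl := htail t₀ t ht₀T ht
    have hcoord : utilde t j ≤ 2 * ε' + c * (t - t₀) := by
      have := hi1
      linarith [hmono1, hsplit2 ▸ hmono1, ht₀j]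
    refine ⟨hcoord, ?_⟩
    -- time bound
    have h0 : 0 ≤ utilde t j := hu_pos t ht0 j
    have htime : t - t₀ ≤ D := by
      rw [hDeq, le_div_iff₀ (show (0:ℝ) < -c by linarith)]
      nlinarith
    -- vector estimate
    have hFTCvec : utilde t - utilde t₀ = ∫ x in t₀..t, (F (utilde x) + f x) := by
      apply (intervalIntegral.integral_eq_sub_of_hasDerivAt ?_ ?_).symm
      · intro x hx
        rw [Set.uIcc_of_le ht] at hx
        exact hu_sol x (le_trans ht₀0 hx.1)
      · exact (hintcont t₀ t ht₀0 ht).intervalIntegrable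
    have hvec : ‖utilde t - utilde t₀‖ ≤ B * (t - t₀) + ε' := by
      rw [hFTCvec]
      refine le_trans (intervalIntegral.norm_integral_le_integral_norm ht) ?_
      have hmono2 : (∫ x in t₀..t, ‖F (utilde x) + f x‖) ≤ ∫ x in t₀..t, (B + ‖f x‖) := by
        apply intervalIntegral.integral_mono_on ht ?_ ?_
        · intro x hx
          refine le_trans (norm_add_le _ _) ?_
          have := hB x (le_trans ht₀0 hx.1)
          linarith
        · apply ContinuousOn.intervalIntegrable
          exact (hintcont t₀ t ht₀0 ht).norm
        · exact (intervalIntegrable_const).add (hf_cont.norm.intervalIntegrable _ _)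
      have hsplit3 : (∫ x in t₀..t, (B + ‖f x‖))
          = B * (t - t₀) + ∫ x in t₀..t, ‖f x‖ := by
        rw [intervalIntegral.integral_add intervalIntegrable_const
          (hf_cont.norm.intervalIntegrable _ _), intervalIntegral.integral_const, smul_eq_mul]
        ring
      linarith [hsplit3 ▸ hmono2, htl]
    have h5 : ‖utilde t - ustar‖ ≤ ‖utilde t - utilde t₀‖ + ‖utilde t₀ - ustar‖ := by
      have := norm_sub_le_norm_sub_add_norm_sub (utilde t) (utilde t₀) ustar
      linarith [norm_add_le (utilde t - utilde t₀) (utilde t₀ - ustar)]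
    have h6 : B * (t - t₀) ≤ B * D := mul_le_mul_of_nonneg_left htime hBnn
    calc ‖utilde t - ustar‖ ≤ B * (t - t₀) + ε' + ε' := by linarith
      _ ≤ B * D + 2 * ε' := by linarith
      _ = K * ε' := by linarith [hKD]
      _ = r / 4 := hKε'
  -- exclusion of exit from the ball
  have hUcont : Continuous (fun t : ℝ => utilde (max t 0)) := by
    rw [continuous_iff_continuousAt]
    intro x
    have h1 := ContinuousAt.comp (x := x) (hucont _ (le_max_right x 0))
      ((continuous_id.max continuous_const).continuousAt)
    exact h1
  set E : Set ℝ := {t | t ∈ Set.Icc t₀ t₁ ∧ r / 2 ≤ ‖utilde (max t 0) - ustar‖} with hEdef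
  have hballAll : ∀ x ∈ Set.Icc t₀ t₁, ‖utilde x - ustar‖ ≤ r := by
    have hEempty : E = ∅ := by
      by_contra hne
      have hEclosed : IsClosed E := by
        apply IsClosed.inter isClosed_Icc
        exact isClosed_le continuous_const (hUcont.sub continuous_const).norm
      have hEnonempty : E.Nonempty := Set.nonempty_iff_ne_empty.2 hne
      have hEbdd : BddBelow E := ⟨t₀, fun x hx => hx.1.1⟩
      have hτmem : sInf E ∈ E := hEclosed.csInf_mem hEnonempty hEbdd
      set τ := sInf E with hτdef
      have hτIcc : τ ∈ Set.Icc t₀ t₁ := hτmem.1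
      have hτ0 : (0:ℝ) ≤ τ := le_trans ht₀0 hτIcc.1
      have hτmax : max τ 0 = τ := max_eq_left hτ0
      have hτge : r / 2 ≤ ‖utilde τ - ustar‖ := by
        have := hτmem.2
        rwa [hτmax] at this
      have hτne : τ ≠ t₀ := by
        intro h
        rw [h] at hτge
        linarith [ht₀close, hε'le, hrpos]
      have hτgt : t₀ < τ := lt_of_le_of_ne hτIcc.1 (Ne.symm hτne)
      have hlt : ∀ x, t₀ ≤ x → x < τ → ‖utilde x - ustar‖ < r / 2 := by
        intro x hx1 hx2
        have hxE : x ∉ E := fun hmem => absurd (csInf_le hEbdd hmem) (not_le.2 hx2)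
        have hxIcc : x ∈ Set.Icc t₀ t₁ := ⟨hx1, le_trans hx2.le hτIcc.2⟩
        by_contra hcon
        push_neg at hcon
        apply hxE
        refine ⟨hxIcc, ?_⟩
        rw [max_eq_left (le_trans ht₀0 hx1)]
        exact hcon
      have hτle : ‖utilde τ - ustar‖ ≤ r / 2 := by
        have h2 : Tendsto (fun x => ‖utilde (max x 0) - ustar‖) (nhdsWithin τ (Set.Iio τ))
            (nhds ‖utilde (max τ 0) - ustar‖) :=
          ((hUcont.sub continuous_const).norm.tendsto τ).mono_left nhdsWithin_le_nhds
        rw [hτmax] at h2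
        refine le_of_tendsto h2 ?_
        filter_upwards [Ico_mem_nhdsLT_of_mem (Set.mem_Ioc.2 ⟨hτgt, le_refl τ⟩)] with x hx
        rw [max_eq_left (le_trans ht₀0 hx.1)]
        exact (hlt x hx.1 hx.2).le
      have hball : ∀ x ∈ Set.Icc t₀ τ, ‖utilde x - ustar‖ ≤ r := by
        intro x hx
        rcases eq_or_lt_of_le hx.2 with h | h
        · rw [h]
          linarith
        · linarith [hlt x hx.1 h]
      have hcl := claim τ hτIcc.1 hball
      linarith [hcl.2]
    intro x hx
    have hxE : x ∉ E := by
      rw [hEempty]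
      exact Set.notMem_empty x
    have h1 : ¬ (r / 2 ≤ ‖utilde (max x 0) - ustar‖) := fun hc => hxE ⟨hx, hc⟩
    push_neg at h1
    rw [max_eq_left (le_trans ht₀0 hx.1)] at h1
    linarith
  have hcl := claim t₁ ht₁gt hballAll
  have h0 : 0 ≤ utilde t₁ j := hu_pos t₁ (le_trans ht₀0 ht₁gt) j
  have hfinal : 2 * ε' + c * (t₁ - t₀) = c + 2 * ε' + c * D := by
    simp only [ht₁def]
    ring
  have hcD : c * D = -(2 * ε') := by
    rw [hDeq, div_neg, mul_neg, mul_div_assoc', mul_div_cancel_left₀ _ hcne]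
  linarith [hcl.1]
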